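/- Liquid association equals the triple moment under normality: Let (Ω, F, P) be a probability space and X, Y, Z real random variables such that the law of Z is the standard Gaussian N(0,1), the product X·Y is integrable, and X·Y·Z is integrable. Suppose g : ℝ → ℝ is a measurable, differentiable function such that g∘Z is a version of the conditional expectation E[X·Y | σ(Z)], with g'∘Z integrable and z ↦ z·g(z) integrable with respect to the law of Z. Then E[g'(Z)] = E[X·Y·Z]. -/

import Mathlib

open MeasureTheory ProbabilityTheory Real


lemma phi_deriv (x : ℝ) :
    HasDerivAt (gaussianPDFReal 0 1) (-x * gaussianPDFReal 0 1 x) x := by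
  have h1 : HasDerivAt (fun y : ℝ => -(y - 0)^2/(2*((1:NNReal):ℝ))) (-x) x := by
    have : HasDerivAt (fun y : ℝ => -(y - 0)^2/(2*((1:NNReal):ℝ)))
        (-(2 * (x - 0)^1 * 1)/(2*((1:NNReal):ℝ))) x :=
      (((hasDerivAt_id x).sub_const 0).pow 2).neg.div_const _
    convert this using 1
    push_cast
    ring
  have h2 := (h1.exp.const_mul ((Real.sqrt (2 * π * ((1:NNReal):ℝ)))⁻¹))
  rw [gaussianPDFReal_def]
  refine h2.congr_deriv ?_
  beta_reduce
  ring

lemma gauss_integral (f : ℝ → ℝ) :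
    ∫ x, f x ∂(gaussianReal 0 1) = ∫ x, gaussianPDFReal 0 1 x * f x := by
  rw [gaussianReal_of_var_ne_zero 0 one_ne_zero]
  have h : (gaussianPDF 0 1) = fun x => (((gaussianPDFReal 0 1 x).toNNReal : NNReal) : ENNReal) :=
    rfl
  rw [h, integral_withDensity_eq_integral_smul ((measurable_gaussianPDFReal 0 1).real_toNNReal)]
  congr 1; ext x
  simp [NNReal.smul_def, Real.coe_toNNReal _ (gaussianPDFReal_nonneg 0 1 x)]

lemma gauss_integrable (f : ℝ → ℝ) :
    Integrable f (gaussianReal 0 1) ↔ Integrable (fun x => gaussianPDFReal 0 1 x * f x) volume := by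
  rw [gaussianReal_of_var_ne_zero 0 one_ne_zero]
  have h : (gaussianPDF 0 1) = fun x => (((gaussianPDFReal 0 1 x).toNNReal : NNReal) : ENNReal) :=
    rfl
  rw [h, integrable_withDensity_iff_integrable_smul
    ((measurable_gaussianPDFReal 0 1).real_toNNReal)]
  constructor <;> intro hi <;> refine hi.congr (Filter.Eventually.of_forall fun x => ?_) <;>
    simp [NNReal.smul_def, Real.coe_toNNReal _ (gaussianPDFReal_nonneg 0 1 x)]

lemma stein (g : ℝ → ℝ) (hg : Differentiable ℝ g)
    (hg' : Integrable (fun x => deriv g x) (gaussianReal 0 1))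
    (hzg : Integrable (fun z => z * g z) (gaussianReal 0 1)) :
    ∫ x, deriv g x ∂(gaussianReal 0 1) = ∫ x, x * g x ∂(gaussianReal 0 1) := by
  set φ := gaussianPDFReal 0 1 with hφ
  have hφc : Continuous φ := by
    rw [hφ, gaussianPDFReal_def]
    continuity
  have hderiv : ∀ x, HasDerivAt (fun x => g x * φ x)
      (deriv g x * φ x - x * (g x * φ x)) x := by
    intro x
    have := ((hg x).hasDerivAt.mul (phi_deriv x))
    refine this.congr_deriv ?_
    ring
  have hgφ' : Integrable (fun x => deriv g x * φ x) volume := by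
    have := (gauss_integrable _).mp hg'
    exact this.congr (Filter.Eventually.of_forall fun x => mul_comm _ _)
  have hzgφ : Integrable (fun x => x * (g x * φ x)) volume := by
    have := (gauss_integrable _).mp hzg
    exact this.congr (Filter.Eventually.of_forall fun x => by ring)
  have hc : Continuous (fun x => g x * φ x) := hg.continuous.mul hφc
  have hbig : ∀ s : Set ℝ, MeasurableSet s → (∀ x ∈ s, (1:ℝ) ≤ |x|) →
      IntegrableOn (fun x => g x * φ x) s volume := by
    intro s hs h1
    refine hzgφ.abs.integrableOn.mono' hc.aestronglyMeasurable.restrict ?_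
    refine ae_restrict_of_forall_mem hs fun x hx => ?_
    have : |g x * φ x| * 1 ≤ |g x * φ x| * |x| :=
      mul_le_mul_of_nonneg_left (h1 x hx) (abs_nonneg _)
    simpa [Real.norm_eq_abs, abs_mul, mul_comm] using this
  have h2 : IntegrableOn (fun x => g x * φ x) (Set.Iic (-1)) volume :=
    hbig _ measurableSet_Iic fun x hx => by
      rw [abs_of_nonpos (le_trans hx (by norm_num))]; linarith [hx.out]
  have h3 : IntegrableOn (fun x => g x * φ x) (Set.Ici 1) volume :=
    hbig _ measurableSet_Ici fun x hx => le_trans hx.out (le_abs_self x)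
  have h1 : IntegrableOn (fun x => g x * φ x) (Set.Icc (-1) 1) volume :=
    hc.continuousOn.integrableOn_compact isCompact_Icc
  have hint : Integrable (fun x => g x * φ x) volume := by
    have hu : Set.Iic (-1:ℝ) ∪ (Set.Icc (-1) 1 ∪ Set.Ici 1) = Set.univ := by
      ext x
      simp only [Set.mem_union, Set.mem_Iic, Set.mem_Icc, Set.mem_Ici, Set.mem_univ, iff_true]
      rcases le_total x (-1) with h | h
      · exact Or.inl h
      · rcases le_total x 1 with h' | h'
        · exact Or.inr (Or.inl ⟨h, h'⟩)
        · exact Or.inr (Or.inr h')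
    rw [← integrableOn_univ, ← hu]
    exact h2.union (h1.union h3)
  have hzero := integral_eq_zero_of_hasDerivAt_of_integrable hderiv (hgφ'.sub hzgφ) hint
  rw [integral_sub hgφ' hzgφ, sub_eq_zero] at hzero
  rw [gauss_integral, gauss_integral]
  calc ∫ x, φ x * deriv g x = ∫ x, deriv g x * φ x := by simp_rw [mul_comm]
  _ = ∫ x, x * (g x * φ x) := hzero
  _ = ∫ x, φ x * (x * g x) := by congr 1; ext x; ring

/-- Liquid association equals the triple moment under normality: if `Z` has standard Gaussian
law, `X*Y` and `X*Y*Z` are integrable, and `g` is a measurable differentiable function such that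
`g ∘ Z` is a version of the conditional expectation `E[X*Y | σ(Z)]`, with `g' ∘ Z` integrable and
`z ↦ z * g z` integrable with respect to the law of `Z`, then `E[g'(Z)] = E[X*Y*Z]`. -/
theorem liquid_association_eq_triple_moment
    {Ω : Type*} [MeasurableSpace Ω] (P : Measure Ω) [IsProbabilityMeasure P]
    (X Y Z : Ω → ℝ) (hX : Measurable X) (hY : Measurable Y) (hZ : Measurable Z)
    (hlawZ : P.map Z = gaussianReal 0 1)
    (hXY : Integrable (fun ω => X ω * Y ω) P)
    (hXYZ : Integrable (fun ω => X ω * Y ω * Z ω) P)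
    (g : ℝ → ℝ) (hgm : Measurable g) (hg : Differentiable ℝ g)
    (hcond : (fun ω => g (Z ω)) =ᵐ[P]
      P[fun ω => X ω * Y ω | MeasurableSpace.comap Z inferInstance])
    (hg' : Integrable (fun ω => deriv g (Z ω)) P)
    (hzg : Integrable (fun z => z * g z) (P.map Z)) :
    ∫ ω, deriv g (Z ω) ∂P = ∫ ω, X ω * Y ω * Z ω ∂P := by
  have hderiv_m : Measurable (deriv g) := measurable_deriv g
  have hg'map : Integrable (fun x => deriv g x) (P.map Z) :=
    (integrable_map_measure hderiv_m.aestronglyMeasurable hZ.aemeasurable).mpr hg'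
  have h1 : ∫ ω, deriv g (Z ω) ∂P = ∫ x, deriv g x ∂(P.map Z) :=
    (integral_map hZ.aemeasurable hderiv_m.aestronglyMeasurable).symm
  have h2 : ∫ ω, Z ω * g (Z ω) ∂P = ∫ x, x * g x ∂(P.map Z) :=
    (integral_map hZ.aemeasurable (measurable_id.mul hgm).aestronglyMeasurable).symm
  have hstein : ∫ x, deriv g x ∂(P.map Z) = ∫ x, x * g x ∂(P.map Z) := by
    rw [hlawZ] at hg'map hzg ⊢
    exact stein g hg hg'map hzg
  rw [h1, hstein, ← h2]
  -- now: ∫ Z ω * g (Z ω) = ∫ X Y Z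
  set m := MeasurableSpace.comap Z inferInstance with hm_def
  have hm : m ≤ _ := hZ.comap_le
  haveI : SigmaFinite (P.trim hm) := inferInstance
  have hZm : StronglyMeasurable[m] Z :=
    (Measurable.of_comap_le le_rfl).stronglyMeasurable
  have hmul : Integrable (Z * fun ω => X ω * Y ω) P :=
    hXYZ.congr (Filter.Eventually.of_forall fun ω => by simp [Pi.mul_apply]; ring)
  have hpull := condExp_mul_of_stronglyMeasurable_left hZm hmul hXY
  have e1 : (fun ω => Z ω * g (Z ω)) =ᵐ[P]
      (Z * P[fun ω => X ω * Y ω|m]) := by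
    filter_upwards [hcond] with ω h
    simp only [Pi.mul_apply]
    rw [← h]
  calc ∫ ω, Z ω * g (Z ω) ∂P = ∫ ω, (Z * P[fun ω => X ω * Y ω|m]) ω ∂P :=
        integral_congr_ae e1
    _ = ∫ ω, (P[Z * fun ω => X ω * Y ω|m]) ω ∂P := (integral_congr_ae hpull).symm
    _ = ∫ ω, (Z * fun ω => X ω * Y ω) ω ∂P := integral_condExp hm
    _ = ∫ ω, X ω * Y ω * Z ω ∂P := by
        congr 1; ext ω; simp [Pi.mul_apply]; ring
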